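/- Let λ > 0, Δ > 0, δ ∈ (0,1), set ε = (Δ/λ)·√(2·ln(1.25/δ)), and assume ε ≤ 1. Let Z be a real random variable with law N(0, λ²). Then P(Z > λ²·ε/Δ − Δ/2) ≤ δ. -/

import Mathlib

open MeasureTheory ProbabilityTheory Real

lemma gauss_Ioi_zero' (v : NNReal) (hv : (0:ℝ) < v) :
    ∫ x in Set.Ioi (0:ℝ), gaussianPDFReal 0 v x = 1 / 2 := by
  simp only [gaussianPDFReal, sub_zero]
  rw [integral_const_mul]
  have h1 : ∀ x : ℝ, -x^2/(2*(v:ℝ)) = -(1/(2*(v:ℝ))) * x^2 := fun x => by field_simp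
  simp_rw [h1]
  rw [integral_gaussian_Ioi]
  have h2 : π / (1/(2*(v:ℝ))) = 2 * π * v := by field_simp
  rw [h2]
  have h3 : (0:ℝ) < Real.sqrt (2 * π * v) := Real.sqrt_pos.mpr (by positivity)
  field_simp

lemma exp_int_Ioi' (t b : ℝ) (hb : 0 < b) :
    ∫ x in Set.Ioi t, rexp (-(b*x)) = b⁻¹ * rexp (-(b*t)) := by
  have := integral_comp_mul_left_Ioi (fun y => rexp (-y)) t hb
  simpa [integral_exp_neg_Ioi, integral_exp_Iic, smul_eq_mul] using this

lemma exp_half_le' : rexp (1/2:ℝ) ≤ 1.6488 := by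
  have h := Real.exp_one_lt_d9
  have h2 : rexp (1/2:ℝ) ^ 2 = rexp 1 := by rw [← Real.exp_nat_mul]; norm_num
  nlinarith [Real.exp_pos (1/2:ℝ)]

lemma exp_quarter_le' : rexp (1/4:ℝ) ≤ 1.29 := by
  have h := Real.exp_one_lt_d9
  have h2 : rexp (1/4:ℝ) ^ 4 = rexp 1 := by rw [← Real.exp_nat_mul]; norm_num
  by_contra h'
  push_neg at h'
  have h3 : (1.29:ℝ) ^ 4 ≤ rexp (1/4:ℝ) ^ 4 := pow_le_pow_left₀ (by norm_num) h'.le 4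
  rw [h2] at h3; norm_num at h3; linarith

lemma log_125_ge' : (0.2:ℝ) ≤ Real.log 1.25 := by
  have h := Real.exp_one_lt_d9
  rw [Real.le_log_iff_exp_le (by norm_num)]
  have h2 : rexp (0.2:ℝ) ^ 5 = rexp 1 := by rw [← Real.exp_nat_mul]; norm_num
  by_contra h'
  push_neg at h'
  have h3 : (1.25:ℝ) ^ 5 ≤ rexp (0.2:ℝ) ^ 5 := pow_le_pow_left₀ (by norm_num) h'.le 5
  rw [h2] at h3; norm_num at h3; linarith

lemma log_25_ge' : (0.6:ℝ) ≤ Real.log 2.5 := by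
  have hexp1 := Real.exp_one_lt_d9
  rw [Real.le_log_iff_exp_le (by norm_num)]
  have h2 : rexp (0.6:ℝ) ^ 5 = rexp 1 ^ 3 := by
    rw [← Real.exp_nat_mul, ← Real.exp_nat_mul]; norm_num
  by_contra h'
  push_neg at h'
  have h3 : (2.5:ℝ) ^ 5 ≤ rexp (0.6:ℝ) ^ 5 := pow_le_pow_left₀ (by norm_num) h'.le 5
  have h4 : rexp 1 ^ 3 ≤ 2.7182818286 ^ 3 := pow_le_pow_left₀ (Real.exp_pos 1).le hexp1.le 3
  rw [h2] at h3; norm_num at h3 h4; linarith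

lemma sqrt_two_pi_ge' : (2.5:ℝ) ≤ Real.sqrt (2 * π) := by
  have := Real.pi_gt_d6
  rw [Real.le_sqrt (by norm_num)]
  · nlinarith
  · positivity

set_option maxHeartbeats 1000000 in
/-- Tail bound on the Gaussian privacy-loss random variable: the key analytic step of the
Gaussian mechanism. -/
theorem stmt15 {Ω : Type*} [MeasurableSpace Ω] (P : Measure Ω) [IsProbabilityMeasure P]
    (lam Δ δ : ℝ) (hlam : 0 < lam) (hΔ : 0 < Δ) (hδ : δ ∈ Set.Ioo (0 : ℝ) 1)
    (ε : ℝ) (hε : ε = (Δ / lam) * Real.sqrt (2 * Real.log (1.25 / δ))) (hε1 : ε ≤ 1)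
    (Z : Ω → ℝ) (hZ : Measure.map Z P = gaussianReal 0 (lam ^ 2).toNNReal) :
    P {ω | lam ^ 2 * ε / Δ - Δ / 2 < Z ω} ≤ ENNReal.ofReal δ := by
  obtain ⟨hδ0, hδ1⟩ := hδ
  have hlam2 : (0:ℝ) < lam ^ 2 := by positivity
  set v : NNReal := (lam ^ 2).toNNReal with hvdef
  have hvr : (v : ℝ) = lam ^ 2 := Real.coe_toNNReal _ hlam2.le
  have hv0 : (0:ℝ) < v := by rw [hvr]; exact hlam2
  have hvne : v ≠ 0 := by
    intro h; rw [h] at hvr; simp at hvr; nlinarith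
  -- reduce to a real integral inequality
  have hZm : AEMeasurable Z P := aemeasurable_of_map_neZero (by rw [hZ]; infer_instance)
  set t : ℝ := lam ^ 2 * ε / Δ - Δ / 2 with htdef
  have hset : {ω | t < Z ω} = Z ⁻¹' (Set.Ioi t) := rfl
  rw [hset, ← Measure.map_apply_of_aemeasurable hZm measurableSet_Ioi, hZ,
    gaussianReal_apply_eq_integral _ hvne]
  refine ENNReal.ofReal_le_ofReal ?_
  -- notation
  set L : ℝ := Real.log (1.25 / δ) with hLdef
  have hL0 : 0 < L := Real.log_pos (by rw [lt_div_iff₀ hδ0]; linarith)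
  set c : ℝ := Real.sqrt (2 * L) with hcdef
  have hc0 : 0 < c := Real.sqrt_pos.mpr (by linarith)
  have hc2 : c ^ 2 = 2 * L := Real.sq_sqrt (by linarith)
  have hεc : ε = (Δ / lam) * c := hε
  have hε0 : 0 < ε := by rw [hεc]; positivity
  have hδL : δ = 1.25 * rexp (-L) := by
    rw [hLdef, Real.exp_neg, Real.exp_log (by positivity)]
    field_simp
  obtain ⟨u, hudef⟩ : ∃ x : ℝ, x = c - ε / (2 * c) := ⟨_, rfl⟩
  have htu : t = lam * u := by
    rw [htdef, hudef, hεc]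
    field_simp
  -- numeric constants
  have hexp1 := Real.exp_one_lt_d9
  have hpi := Real.pi_gt_d6
  have hsqrt2pi : (2.5:ℝ) ≤ Real.sqrt (2 * π) := sqrt_two_pi_ge'
  have hsqrt2pi0 : (0:ℝ) < Real.sqrt (2 * π) := by linarith
  have hsqrtv : Real.sqrt (2*π*(v:ℝ)) = Real.sqrt (2*π) * lam := by
    rw [hvr, Real.sqrt_mul (by positivity), Real.sqrt_sq hlam.le]
  -- pdf integrable
  have hint : Integrable (gaussianPDFReal 0 v) := integrable_gaussianPDFReal 0 v
  have hnonneg : ∀ x, 0 ≤ gaussianPDFReal 0 v x := gaussianPDFReal_nonneg 0 v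
  rcases le_or_gt (1/2 : ℝ) δ with hhalf | hhalf
  · -- δ ≥ 1/2
    rcases le_or_gt 0 t with ht0 | ht0
    · -- t ≥ 0 : bound by 1/2
      have h1 : ∫ x in Set.Ioi t, gaussianPDFReal 0 v x
          ≤ ∫ x in Set.Ioi (0:ℝ), gaussianPDFReal 0 v x := by
        apply setIntegral_mono_set hint.integrableOn (ae_of_all _ hnonneg)
        exact HasSubset.Subset.eventuallyLE (Set.Ioi_subset_Ioi ht0)
      rw [gauss_Ioi_zero' v hv0] at h1
      linarith
    · -- t < 0 : then L < 1/4 hence δ ≥ 0.96, and integral ≤ 1/2 + small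
      have hu0 : u < 0 := by nlinarith [htu ▸ ht0]
      have hL14 : L < 1/4 := by
        have h1 : c < ε / (2 * c) := by rw [hudef] at hu0; linarith
        rw [lt_div_iff₀ (by positivity)] at h1
        nlinarith
      have hδbig : 0.96 ≤ δ := by
        have he14 : rexp (1/4:ℝ) ≤ 1.29 := exp_quarter_le'
        have h5 : rexp (-(1/4:ℝ)) ≤ rexp (-L) := Real.exp_le_exp.mpr (by linarith)
        have hmul : rexp (1/4:ℝ) * rexp (-(1/4:ℝ)) = 1 := by
          rw [← Real.exp_add]; norm_num
        have h6 : (1:ℝ) ≤ 1.29 * rexp (-(1/4:ℝ)) := by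
          calc (1:ℝ) = rexp (1/4:ℝ) * rexp (-(1/4:ℝ)) := hmul.symm
            _ ≤ 1.29 * rexp (-(1/4:ℝ)) :=
              mul_le_mul_of_nonneg_right he14 (Real.exp_pos _).le
        linarith
      -- split the integral at 0
      have hsplit : ∫ x in Set.Ioi t, gaussianPDFReal 0 v x
          = (∫ x in Set.Ioc t 0, gaussianPDFReal 0 v x)
            + ∫ x in Set.Ioi (0:ℝ), gaussianPDFReal 0 v x := by
        rw [← setIntegral_union (Set.Ioc_disjoint_Ioi le_rfl) measurableSet_Ioi
          hint.integrableOn hint.integrableOn, Set.Ioc_union_Ioi_eq_Ioi ht0.le]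
      have hC0 : (0:ℝ) < (Real.sqrt (2*π*(v:ℝ)))⁻¹ := by
        rw [hsqrtv]; positivity
      have hIoc : ∫ x in Set.Ioc t 0, gaussianPDFReal 0 v x
          ≤ (Real.sqrt (2*π*(v:ℝ)))⁻¹ * (-t) := by
        have h1 : ∫ x in Set.Ioc t 0, gaussianPDFReal 0 v x
            ≤ ∫ _ in Set.Ioc t 0, (Real.sqrt (2*π*(v:ℝ)))⁻¹ := by
          apply setIntegral_mono_on hint.integrableOn
            ((integrableOn_const_iff).mpr (Or.inr (by rw [Real.volume_Ioc]; exact ENNReal.ofReal_lt_top)))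
            measurableSet_Ioc
          intro x _
          rw [gaussianPDFReal]
          simp only [sub_zero]
          have hle1 : rexp (-x^2/(2*(v:ℝ))) ≤ 1 := Real.exp_le_one_iff.mpr (by
            apply div_nonpos_of_nonpos_of_nonneg <;> nlinarith)
          nlinarith
        rw [setIntegral_const, measureReal_def, Real.volume_Ioc,
          ENNReal.toReal_ofReal (by linarith), smul_eq_mul] at h1
        calc _ ≤ _ := h1
          _ = (Real.sqrt (2*π*(v:ℝ)))⁻¹ * (-t) := by ring
      -- numeric bound on -u
      have hlog125 : (0.2:ℝ) ≤ Real.log 1.25 := log_125_ge'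
      have hLlb : (0.2:ℝ) ≤ L := by
        have h7 : Real.log 1.25 ≤ L := by
          apply Real.log_le_log (by norm_num)
          rw [le_div_iff₀ hδ0]; nlinarith
        linarith
      have hclb : (0.632:ℝ) ≤ c := by
        rw [hcdef, Real.le_sqrt (by norm_num)]
        · linarith
        · linarith
      have hut : -u ≤ 0.16 := by
        have h1 : ε / (2*c) ≤ 1 / (2*c) := by gcongr
        have h2 : 1 / (2*c) ≤ 0.792 := by
          rw [div_le_iff₀ (by positivity)]; linarith
        rw [hudef]
        linarith
      -- conclude
      have hCt : (Real.sqrt (2*π*(v:ℝ)))⁻¹ * (-t) ≤ 0.064 := by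
        have heq : (Real.sqrt (2*π*(v:ℝ)))⁻¹ * (-t) = (-u) / Real.sqrt (2*π) := by
          rw [hsqrtv, htu]
          field_simp
        rw [heq]
        calc (-u) / Real.sqrt (2*π) ≤ 0.16 / Real.sqrt (2*π) := by gcongr
          _ ≤ 0.16 / 2.5 := by gcongr
          _ = 0.064 := by norm_num
      rw [hsplit, gauss_Ioi_zero' v hv0]
      linarith
  · -- δ < 1/2 : refined tail bound
    have hlog25 : (0.6:ℝ) ≤ Real.log 2.5 := log_25_ge'
    have hL6 : (0.6:ℝ) ≤ L := by
      have h7 : Real.log 2.5 ≤ L := by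
        apply Real.log_le_log (by norm_num)
        rw [le_div_iff₀ hδ0]; nlinarith
      linarith
    have hclb : (1.095:ℝ) ≤ c := by
      rw [hcdef, Real.le_sqrt (by norm_num)]
      · nlinarith
      · linarith
    have hinv : 1/(2*c) ≤ 0.457 := by
      rw [div_le_iff₀ (by positivity)]; nlinarith
    have hεdiv : ε/(2*c) ≤ 0.457 := by
      have h1 : ε/(2*c) ≤ 1/(2*c) := by gcongr
      linarith
    have hu : (0.638:ℝ) ≤ u := by rw [hudef]; linarith
    have hu0 : 0 < u := by linarith
    have ht0 : 0 < t := by rw [htu]; positivity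
    have hu2 : c^2 - ε ≤ u^2 := by
      have key : u^2 = c^2 - ε + (ε/(2*c))^2 := by
        rw [hudef]; field_simp; ring
      nlinarith [sq_nonneg (ε/(2*c))]
    -- refined tail bound
    obtain ⟨C, hCdef⟩ : ∃ x : ℝ, x = (Real.sqrt (2*π*(v:ℝ)))⁻¹ := ⟨_, rfl⟩
    have hC0 : 0 < C := by rw [hCdef, hsqrtv]; positivity
    obtain ⟨b, hbdef⟩ : ∃ x : ℝ, x = t / (v:ℝ) := ⟨_, rfl⟩
    have hb0 : 0 < b := by rw [hbdef]; positivity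
    obtain ⟨K, hKdef⟩ : ∃ x : ℝ, x = C * rexp (-t^2/(2*(v:ℝ))) * rexp (b*t) := ⟨_, rfl⟩
    have hK0 : 0 < K := by rw [hKdef]; positivity
    have hpoint : ∀ x ∈ Set.Ioi t, gaussianPDFReal 0 v x ≤ K * rexp (-(b*x)) := by
      intro x hx
      rw [gaussianPDFReal]
      simp only [sub_zero]
      have harg : -x^2/(2*(v:ℝ)) ≤ -t^2/(2*(v:ℝ)) + (b*t + -(b*x)) := by
        have hexpand : -t^2/(2*(v:ℝ)) + (b*t + -(b*x)) = (-t^2 + 2*t*t - 2*t*x)/(2*(v:ℝ)) := by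
          rw [hbdef]; field_simp; ring
        rw [hexpand, div_le_div_iff_of_pos_right (by positivity)]
        have hxt : t < x := hx
        nlinarith [sq_nonneg (x - t)]
      rw [← hCdef]
      calc C * rexp (-x^2/(2*(v:ℝ)))
          ≤ C * rexp (-t^2/(2*(v:ℝ)) + (b*t + -(b*x))) := by
            apply mul_le_mul_of_nonneg_left (Real.exp_le_exp.mpr harg) hC0.le
        _ = K * rexp (-(b*x)) := by
            rw [Real.exp_add, Real.exp_add, hKdef]; ring
    have hintle : ∫ x in Set.Ioi t, gaussianPDFReal 0 v x ≤ K * (b⁻¹ * rexp (-(b*t))) := by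
      have hexpint : IntegrableOn (fun x => K * rexp (-(b*x))) (Set.Ioi t) := by
        simpa [neg_mul, IntegrableOn] using (exp_neg_integrableOn_Ioi t hb0).const_mul K
      calc ∫ x in Set.Ioi t, gaussianPDFReal 0 v x
          ≤ ∫ x in Set.Ioi t, K * rexp (-(b*x)) :=
            setIntegral_mono_on hint.integrableOn hexpint measurableSet_Ioi hpoint
        _ = K * ∫ x in Set.Ioi t, rexp (-(b*x)) := integral_const_mul _ _
        _ = K * (b⁻¹ * rexp (-(b*t))) := by rw [exp_int_Ioi' t b hb0]
    -- compute the closed form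
    have hbu : b = u / lam := by
      rw [hbdef, htu, hvr]; field_simp
    have harg2 : t^2/(2*(v:ℝ)) = u^2/2 := by
      rw [htu, hvr]; field_simp
    have hclosed : K * (b⁻¹ * rexp (-(b*t))) = rexp (-u^2/2) / (Real.sqrt (2*π) * u) := by
      have hcancel : rexp (b*t) * rexp (-(b*t)) = 1 := by
        rw [← Real.exp_add]; ring_nf; exact Real.exp_zero
      have hKe : rexp (-t^2/(2*(v:ℝ))) = rexp (-u^2/2) := by
        rw [neg_div, harg2, neg_div]
      calc K * (b⁻¹ * rexp (-(b*t)))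
          = C * rexp (-u^2/2) * b⁻¹ * (rexp (b*t) * rexp (-(b*t))) := by
            rw [hKdef, hKe]; ring
        _ = C * rexp (-u^2/2) * b⁻¹ := by rw [hcancel, mul_one]
        _ = rexp (-u^2/2) / (Real.sqrt (2*π) * u) := by
            rw [hCdef, hsqrtv, hbu, inv_div]
            field_simp
    rw [hclosed] at hintle
    -- final numeric estimate
    have hLc : L = c^2/2 := by linarith
    have hδc : δ = 1.25 * rexp (-(c^2/2)) := by rw [hδL, hLc]
    have he12 : rexp (1/2:ℝ) ≤ 1.6488 := exp_half_le'
    have hexpu : rexp (-u^2/2) ≤ rexp (-(c^2/2)) * 1.6488 := by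
      calc rexp (-u^2/2) ≤ rexp (-(c^2/2) + 1/2) :=
            Real.exp_le_exp.mpr (by linarith only [hu2, hε1])
        _ = rexp (-(c^2/2)) * rexp (1/2) := Real.exp_add _ _
        _ ≤ rexp (-(c^2/2)) * 1.6488 :=
            mul_le_mul_of_nonneg_left he12 (Real.exp_pos _).le
    have hfinal : rexp (-u^2/2) / (Real.sqrt (2*π) * u) ≤ δ := by
      rw [div_le_iff₀ (by positivity)]
      have h8 : (1.595:ℝ) ≤ Real.sqrt (2*π) * u := by
        have h8' := mul_le_mul hsqrt2pi hu (by norm_num) (by positivity)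
        linarith only [h8']
      have h9 : (0:ℝ) < rexp (-(c^2/2)) := Real.exp_pos _
      have h10 : 1.25 * rexp (-(c^2/2)) * 1.595 ≤ 1.25 * rexp (-(c^2/2)) * (Real.sqrt (2*π) * u) :=
        mul_le_mul_of_nonneg_left h8 (by positivity)
      rw [hδc]
      linarith only [hexpu, h9, h10]
    linarith only [hintle, hfinal]
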